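/- A group homomorphism ω' : K'¹ → ℂˣ satisfies ω'(β(x)) = ω'(x) for all x ∈ K'¹ if and only if there exists a group homomorphism ω : K¹ → ℂˣ such that ω'(x) = ω(N_{K'/K}(x)) for all x ∈ K'¹. -/

import Mathlib

open IntermediateField

noncomputable instance : RootableBy ℂˣ ℕ :=
  rootableByOfPowLeftSurj _ _ <| fun {m} hm z => by
    obtain ⟨w, hw⟩ := IsAlgClosed.exists_pow_nat_eq (z : ℂ) (Nat.pos_of_ne_zero hm)
    have hw0 : w ≠ 0 := by
      rintro rfl
      exact z.ne_zero (by simpa [zero_pow hm] using hw.symm)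
    exact ⟨Units.mk0 w hw0, Units.ext (by simp [hw])⟩

noncomputable instance : RootableBy ℂˣ ℤ := Group.rootableByIntOfRootableByNat ℂˣ

noncomputable instance : DivisibleBy (Additive ℂˣ) ℤ where
  div a n := Additive.ofMul (RootableBy.root a.toMul n)
  div_zero a := congrArg Additive.ofMul (RootableBy.root_zero _)
  div_cancel a hn := by
    show (_ : ℤ) • Additive.ofMul _ = a
    rw [← ofMul_zpow, RootableBy.root_cancel _ hn]
    rfl

lemma charExtend {G : Type} [CommGroup G] (H : Subgroup G) (f : H →* ℂˣ) :
    ∃ F : G →* ℂˣ, ∀ h : H, F (h : G) = f h := by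
  have inj : Module.Injective ℤ (Additive ℂˣ) :=
    Module.Baer.injective (Module.Baer.of_divisible _)
  let i : Additive ↥H →+ Additive G := MonoidHom.toAdditive H.subtype
  have hi : Function.Injective i := fun a b hab => Subtype.ext hab
  obtain ⟨h, hh⟩ := inj.out i.toIntLinearMap hi (MonoidHom.toAdditive f).toIntLinearMap
  refine ⟨MonoidHom.toAdditive.symm h.toAddMonoidHom, fun x => ?_⟩
  exact hh x

lemma hilbert90_cyclic {F L : Type} [Field F] [Field L] [Algebra F L] [FiniteDimensional F L]
    (σ : L ≃ₐ[F] L) (hgen : ∀ g : L ≃ₐ[F] L, g ∈ Subgroup.zpowers σ)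
    (x : Lˣ) (hx : ∏ j ∈ Finset.range (orderOf σ), (σ ^ j) • x = 1) :
    ∃ u : Lˣ, x = σ • u / u := by
  classical
  set m := orderOf σ with hm
  have hm0 : 0 < m := orderOf_pos σ
  set Fn : ℕ → Lˣ := fun a => ∏ j ∈ Finset.range a, (σ ^ j) • x with hFn
  have Fadd : ∀ a b, Fn (a + b) = Fn a * (σ ^ a) • Fn b := by
    intro a b
    rw [hFn]
    simp only
    rw [Finset.prod_range_add]
    congr 1
    rw [show (σ ^ a • ∏ j ∈ Finset.range b, σ ^ j • x) = ∏ j ∈ Finset.range b, σ ^ a • σ ^ j • x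
      from map_prod (MulDistribMulAction.toMonoidHom Lˣ (σ ^ a)) _ _]
    apply Finset.prod_congr rfl
    intro j _
    show (σ ^ (a + j)) • x = (σ ^ a) • (σ ^ j) • x
    rw [← mul_smul, ← pow_add]
  have Fone : Fn m = 1 := hx
  have Fmod : ∀ a, Fn a = Fn (a % m) := by
    have key : ∀ q r, Fn (r + m * q) = Fn r := by
      intro q
      induction q with
      | zero => simp
      | succ q ih =>
        intro r
        have : r + m * (q + 1) = (r + m * q) + m := by ring
        rw [this, Fadd, Fone, smul_one, mul_one, ih]
    intro a
    conv_lhs => rw [← Nat.mod_add_div a m, key]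
  have keyF : ∀ a b, σ ^ a = σ ^ b → Fn a = Fn b := by
    intro a b h
    rw [Fmod a, Fmod b, hm, pow_inj_mod.mp h]
  have hsur : ∀ g : L ≃ₐ[F] L, ∃ a : ℕ, σ ^ a = g := by
    intro g
    obtain ⟨k, hk⟩ := Subgroup.mem_zpowers_iff.mp (hgen g)
    refine ⟨(k % (m : ℤ)).toNat, ?_⟩
    rw [← zpow_natCast, Int.toNat_of_nonneg
      (Int.emod_nonneg k (by exact_mod_cast hm0.ne')), hm, zpow_mod_orderOf, hk]
  choose ind hind using hsur
  set f : (L ≃ₐ[F] L) → Lˣ := fun g => Fn (ind g) with hf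
  have hcoc : groupCohomology.IsMulCocycle₁ f := by
    intro g h
    have h1 : σ ^ (ind (g * h)) = σ ^ (ind g + ind h) := by
      rw [hind, pow_add, hind, hind]
    show Fn (ind (g * h)) = g • Fn (ind h) * Fn (ind g)
    rw [keyF _ _ h1, Fadd, hind g]
    exact mul_comm _ _
  obtain ⟨y, hy⟩ := groupCohomology.isMulCoboundary₁_of_isMulCocycle₁_of_aut_to_units f hcoc
  refine ⟨y, ?_⟩
  have h1 : Fn (ind σ) = Fn 1 := keyF _ _ (by rw [hind, pow_one])
  have hF1 : Fn 1 = x := by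
    rw [hFn]
    simp only [Finset.prod_range_one, pow_zero, one_smul]
  rw [← hF1, ← h1]
  exact (hy σ).symm

lemma norm_aut {F L : Type} [Field F] [Field L] [Algebra F L] [FiniteDimensional F L]
    [IsGalois F L] (g : L ≃ₐ[F] L) (y : L) :
    Algebra.norm F (g y) = Algebra.norm F y := by
  apply (algebraMap F L).injective
  rw [Algebra.norm_eq_prod_automorphisms, Algebra.norm_eq_prod_automorphisms]
  calc ∏ σ : L ≃ₐ[F] L, σ (g y) = ∏ σ : L ≃ₐ[F] L, ((Equiv.mulRight g) σ) y :=
        Finset.prod_congr rfl fun σ _ => (AlgEquiv.mul_apply σ g y).symm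
    _ = ∏ σ : L ≃ₐ[F] L, σ y := Equiv.prod_comp (Equiv.mulRight g) (fun τ => τ y)

lemma norm_prod_pow {F L : Type} [Field F] [Field L] [Algebra F L] [FiniteDimensional F L]
    [IsGalois F L] (σ : L ≃ₐ[F] L) (h : Fintype.card (L ≃ₐ[F] L) = orderOf σ) (y : L) :
    algebraMap F L (Algebra.norm F y) = ∏ i ∈ Finset.range (orderOf σ), (σ ^ i) y := by
  rw [Algebra.norm_eq_prod_automorphisms]
  have hbij : Function.Bijective (fun i : Fin (orderOf σ) => σ ^ (i : ℕ)) := by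
    rw [Fintype.bijective_iff_injective_and_card]
    refine ⟨fun i j hij => ?_, by simp [h]⟩
    have := pow_inj_mod.mp hij
    rwa [Nat.mod_eq_of_lt i.2, Nat.mod_eq_of_lt j.2, ← Fin.ext_iff] at this
  rw [← Fintype.prod_bijective _ hbij (fun i => (σ ^ (i : ℕ)) y) (fun g => g y) (fun i => rfl)]
  exact Fin.prod_univ_eq_prod_range (fun i => (σ ^ i) y) (orderOf σ)

set_option maxHeartbeats 2000000 in
set_option synthInstance.maxHeartbeats 1000000 in
theorem stmt_1 (p : ℕ) [Fact p.Prime]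
    (k : Type) [Field k] [Algebra ℚ_[p] k] [FiniteDimensional ℚ_[p] k]
    (K' : Type) [Field K'] [Algebra k K'] [FiniteDimensional k K'] [IsGalois k K']
    (n : ℕ) (hodd : Odd n)
    (α β : K' ≃ₐ[k] K')
    (hcomm : α * β = β * α)
    (hordα : orderOf α = 2) (hordβ : orderOf β = n)
    (hcard : Nat.card (K' ≃ₐ[k] K') = 2 * n)
    (hgen : ∀ g : K' ≃ₐ[k] K', g ∈ Subgroup.closure ({α, β} : Set (K' ≃ₐ[k] K')))
    (K : IntermediateField k K') (hK : K = fixedField (Subgroup.zpowers β))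
    (k' : IntermediateField k K') (hk' : k' = fixedField (Subgroup.zpowers α))
    (K1 : Subgroup (↥K)ˣ)
    (hK1 : ∀ x : (↥K)ˣ, x ∈ K1 ↔ Algebra.norm k (x : ↥K) = 1)
    (K1' : Subgroup K'ˣ)
    (hK1' : ∀ y : K'ˣ, y ∈ K1' ↔ Algebra.norm (↥k') (y : K') = 1)
    (ω' : K1' →* ℂˣ) :
    (∀ x y : K1', ((y : K'ˣ) : K') = β ((x : K'ˣ) : K') → ω' y = ω' x) ↔
      (∃ ω : K1 →* ℂˣ, ∀ (x : K1') (z : K1),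
        ((z : (↥K)ˣ) : ↥K) = Algebra.norm (↥K) ((x : K'ˣ) : K') → ω' x = ω z) := by
  classical
  have hn0 : 0 < n := hodd.pos
  -- commutativity of the Galois group
  have hsubc : ({α, β} : Set (K' ≃ₐ[k] K')) ⊆ Subgroup.centralizer {α, β} := by
    rintro s (rfl | rfl) <;>
    · rw [SetLike.mem_coe, Subgroup.mem_centralizer_iff]
      rintro h (rfl | rfl) <;> first | rfl | exact hcomm | exact hcomm.symm
  have hcen : ∀ g : K' ≃ₐ[k] K', g ∈ Subgroup.centralizer {α, β} :=
    fun g => (Subgroup.closure_le _).mpr hsubc (hgen g)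
  have hgβ : ∀ g : K' ≃ₐ[k] K', β * g = g * β := fun g =>
    Subgroup.mem_centralizer_iff.mp (hcen g) β (by simp)
  have hgα : ∀ g : K' ≃ₐ[k] K', α * g = g * α := fun g =>
    Subgroup.mem_centralizer_iff.mp (hcen g) α (by simp)
  -- function versions
  have hαβfun : ∀ y : K', α (β y) = β (α y) := by
    intro y
    have := congrArg (fun f : K' ≃ₐ[k] K' => f y) hcomm
    simpa [AlgEquiv.mul_apply] using this
  -- fixed field facts
  have hβK : ∀ c : ↥K, β (c : K') = c := by
    intro c
    have hc : (c : K') ∈ fixedField (Subgroup.zpowers β) := hK ▸ c.2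
    exact hc ⟨β, Subgroup.mem_zpowers β⟩
  have hαk' : ∀ c : ↥k', α (c : K') = c := by
    intro c
    have hc : (c : K') ∈ fixedField (Subgroup.zpowers α) := hk' ▸ c.2
    exact hc ⟨α, Subgroup.mem_zpowers α⟩
  have hKmem : ∀ c : K', β c = c → c ∈ K := by
    intro c hc
    rw [hK]
    intro g
    have h2 : Subgroup.zpowers β ≤ MulAction.stabilizer (K' ≃ₐ[k] K') c :=
      Subgroup.zpowers_le.mpr hc
    exact h2 g.2
  -- the relative Galois groups
  have hβ'c : ∀ c : ↥K, β.toRingEquiv (algebraMap (↥K) K' c) = algebraMap (↥K) K' c :=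
    fun c => hβK c
  set β' : K' ≃ₐ[↥K] K' := AlgEquiv.ofRingEquiv hβ'c with hβ'def
  have hβ'apply : ∀ y : K', β' y = β y := fun y => rfl
  have hβ'pow : ∀ (i : ℕ) (y : K'), (β' ^ i) y = (β ^ i) y := by
    intro i
    induction i with
    | zero => intro y; rfl
    | succ i ih =>
      intro y
      rw [pow_succ, pow_succ, AlgEquiv.mul_apply, AlgEquiv.mul_apply, ih]
      rfl
  have horder' : orderOf β' = n := by
    rw [← hordβ]
    apply orderOf_eq_orderOf_iff.mpr
    intro m
    constructor <;> intro h <;> ext y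
    · have := congrArg (fun f : K' ≃ₐ[↥K] K' => f y) h
      simpa [hβ'pow] using this
    · have := congrArg (fun f : K' ≃ₐ[k] K' => f y) h
      rw [← hβ'pow] at this
      simpa using this
  have hcard' : Fintype.card (K' ≃ₐ[↥K] K') = n := by
    rw [← Nat.card_eq_fintype_card, IsGalois.card_aut_eq_finrank]
    rw [hK, IntermediateField.finrank_fixedField_eq_card, Nat.card_zpowers, hordβ]
  have hgen' : ∀ g : K' ≃ₐ[↥K] K', g ∈ Subgroup.zpowers β' := by
    have : Subgroup.zpowers β' = ⊤ := by
      apply Subgroup.eq_top_of_card_eq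
      rw [Nat.card_zpowers, horder', Nat.card_eq_fintype_card, hcard']
    intro g
    rw [this]
    trivial
  -- the k' side
  have hα'c : ∀ c : ↥k', α.toRingEquiv (algebraMap (↥k') K' c) = algebraMap (↥k') K' c :=
    fun c => hαk' c
  set α' : K' ≃ₐ[↥k'] K' := AlgEquiv.ofRingEquiv hα'c with hα'def
  have hα'pow : ∀ (i : ℕ) (y : K'), (α' ^ i) y = (α ^ i) y := by
    intro i
    induction i with
    | zero => intro y; rfl
    | succ i ih =>
      intro y
      rw [pow_succ, pow_succ, AlgEquiv.mul_apply, AlgEquiv.mul_apply, ih]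
      rfl
  have horderα' : orderOf α' = 2 := by
    rw [← hordα]
    apply orderOf_eq_orderOf_iff.mpr
    intro m
    constructor <;> intro h <;> ext y
    · have := congrArg (fun f : K' ≃ₐ[↥k'] K' => f y) h
      simpa [hα'pow] using this
    · have := congrArg (fun f : K' ≃ₐ[k] K' => f y) h
      rw [← hα'pow] at this
      simpa using this
  have hcardα' : Fintype.card (K' ≃ₐ[↥k'] K') = 2 := by
    rw [← Nat.card_eq_fintype_card, IsGalois.card_aut_eq_finrank]
    rw [hk', IntermediateField.finrank_fixedField_eq_card, Nat.card_zpowers, hordα]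
  -- norm translations
  have T1 : ∀ y : K', algebraMap (↥K) K' (Algebra.norm (↥K) y)
      = ∏ i ∈ Finset.range n, (β ^ i) y := by
    intro y
    have h := norm_prod_pow β' (by rw [hcard', horder']) y
    rw [horder'] at h
    rw [h]
    exact Finset.prod_congr rfl fun i _ => hβ'pow i y
  have T2 : ∀ y : K', algebraMap (↥k') K' (Algebra.norm (↥k') y) = y * α y := by
    intro y
    have h := norm_prod_pow α' (by rw [hcardα', horderα']) y
    rw [horderα'] at h
    rw [h, Finset.prod_range_succ, Finset.prod_range_one, pow_zero, pow_one]
    rfl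
  -- bottom field
  have hbot : ∀ a : K', (∀ g : K' ≃ₐ[k] K', g a = a) → ∃ w : k, algebraMap k K' w = a := by
    intro a ha
    have h0 : IntermediateField.fixedField (⊤ : Subgroup (K' ≃ₐ[k] K')) =
        (⊥ : IntermediateField k K') := by
      have h2 := IsGalois.fixedField_fixingSubgroup (⊥ : IntermediateField k K')
      rw [← h2]
      congr 1
      symm
      rw [eq_top_iff]
      intro g _
      intro y
      show g • (y : K') = y
      obtain ⟨w, hw⟩ := IntermediateField.mem_bot.mp y.2
      rw [← hw]
      exact g.commutes w
    have hmem : a ∈ IntermediateField.fixedField (⊤ : Subgroup (K' ≃ₐ[k] K')) :=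
      fun g => ha g
    rw [h0] at hmem
    exact IntermediateField.mem_bot.mp hmem
  -- the norm map K1' → K1
  set ν : K'ˣ →* (↥K)ˣ := Units.map (Algebra.norm (↥K) : K' →* ↥K) with hν
  have hmemN : ∀ x : ↥K1', (ν.comp K1'.subtype) x ∈ K1 := by
    intro x
    rw [hK1]
    show Algebra.norm k ((Algebra.norm (↥K) ((x : K'ˣ) : K'))) = 1
    rw [Algebra.norm_norm, ← Algebra.norm_norm (R := k) (S := ↥k') (a := ((x : K'ˣ) : K')),
      (hK1' _).mp x.2, map_one]
  set Nmap : ↥K1' →* ↥K1 := MonoidHom.codRestrict (ν.comp K1'.subtype) K1 hmemN with hNmap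
  have hNval : ∀ x : ↥K1', ((Nmap x : (↥K)ˣ) : ↥K) = Algebra.norm (↥K) ((x : K'ˣ) : K') :=
    fun x => rfl
  constructor
  · -- hard direction
    intro hinv
    have hker : ∀ x : ↥K1', Nmap x = 1 → ω' x = 1 := by
      intro x hx1
      have h1 : Algebra.norm (↥K) ((x : K'ˣ) : K') = 1 := by
        have h2 := congrArg (fun z : ↥K1 => ((z : (↥K)ˣ) : ↥K)) hx1
        exact h2
      have hx90 : ∏ j ∈ Finset.range (orderOf β'), (β' ^ j) • (x : K'ˣ) = 1 := by
        apply Units.ext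
        rw [Units.val_one]
        calc ((∏ j ∈ Finset.range (orderOf β'), (β' ^ j) • (x : K'ˣ) : K'ˣ) : K')
            = ∏ j ∈ Finset.range (orderOf β'), (((β' ^ j) • (x : K'ˣ) : K'ˣ) : K') :=
              map_prod (Units.coeHom K') _ _
          _ = ∏ j ∈ Finset.range n, (β ^ j) ((x : K'ˣ) : K') := by
              rw [horder']
              exact Finset.prod_congr rfl fun j _ => hβ'pow j _
          _ = algebraMap (↥K) K' (Algebra.norm (↥K) ((x : K'ˣ) : K')) := (T1 _).symm
          _ = 1 := by rw [h1, map_one]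
      obtain ⟨u, hu⟩ := hilbert90_cyclic β' hgen' (x : K'ˣ) hx90
      set U : K' := (u : K') with hUdef
      have hU0 : U ≠ 0 := u.ne_zero
      have hαU0 : α U ≠ 0 := by
        intro h
        apply hU0
        have := congrArg α.symm h
        simpa using this
      have huv : ((x : K'ˣ) : K') = β U / U := by
        rw [hu, Units.val_div_eq_div_val]
        rfl
      set A : K' := U * α U with hAdef
      have hA0 : A ≠ 0 := mul_ne_zero hU0 hαU0
      have hXα : ((x : K'ˣ) : K') * α ((x : K'ˣ) : K') = 1 := by
        rw [← T2 _, (hK1' _).mp x.2, map_one]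
      have hβA : β A = A := by
        have h2 := hXα
        rw [huv, map_div₀, div_mul_div_comm] at h2
        have h3 : β U * α (β U) = U * α U := by
          field_simp [hU0, hαU0] at h2
          exact h2
        rw [hAdef, map_mul, ← hαβfun U]
        exact h3
      have hαA : α A = A := by
        have hα2 : α (α U) = U := by
          have hsq : α ^ 2 = 1 := by rw [← hordα]; exact pow_orderOf_eq_one α
          have h5 := congrArg (fun f : K' ≃ₐ[k] K' => f U) hsq
          rw [pow_two, AlgEquiv.mul_apply] at h5
          exact h5
        rw [hAdef, map_mul, hα2, mul_comm]
      have hgA : ∀ g : K' ≃ₐ[k] K', g A = A := by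
        intro g
        have hsub2 : ({α, β} : Set (K' ≃ₐ[k] K'))
            ⊆ (MulAction.stabilizer (K' ≃ₐ[k] K') A : Set _) := by
          rintro s (rfl | rfl) <;> rw [SetLike.mem_coe, MulAction.mem_stabilizer_iff]
          · exact hαA
          · exact hβA
        exact (Subgroup.closure_le _).mpr hsub2 (hgen g)
      obtain ⟨w, hw⟩ := hbot A hgA
      set t0 : ↥K := Algebra.norm (↥K) U with ht0
      have ht0K : algebraMap (↥K) K' t0 = ∏ i ∈ Finset.range n, (β ^ i) U := T1 U
      have hβt0 : β (algebraMap (↥K) K' t0) = algebraMap (↥K) K' t0 := hβK t0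
      have ht00 : algebraMap (↥K) K' t0 ≠ 0 := by
        have hne : t0 ≠ 0 := Algebra.norm_ne_zero_iff.mpr hU0
        intro h
        exact hne ((algebraMap (↥K) K').injective (by rw [h, map_zero]))
      have hβpowA : ∀ i : ℕ, (β ^ i) A = A := by
        intro i
        induction i with
        | zero => rfl
        | succ i ih => rw [pow_succ, AlgEquiv.mul_apply, hβA, ih]
      have hcommβiα : ∀ (i : ℕ) (y : K'), (β ^ i) (α y) = α ((β ^ i) y) := by
        intro i
        induction i with
        | zero => intro y; rfl
        | succ i ih =>
          intro y
          rw [pow_succ, AlgEquiv.mul_apply, AlgEquiv.mul_apply, ← hαβfun y, ih]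
      have hAn : A ^ n = (algebraMap (↥K) K' t0) * α (algebraMap (↥K) K' t0) := by
        have h5 : A ^ n = ∏ i ∈ Finset.range n, (β ^ i) A := by
          rw [Finset.prod_congr rfl (fun i _ => hβpowA i), Finset.prod_const, Finset.card_range]
        have h6 : ∀ i ∈ Finset.range n, (β ^ i) A = (β ^ i) U * α ((β ^ i) U) := by
          intro i _
          rw [hAdef, map_mul, hcommβiα]
        rw [h5, Finset.prod_congr rfl h6, Finset.prod_mul_distrib, ← map_prod α _ _, ht0K]
      obtain ⟨s, hs⟩ := hodd
      set d : K' := (algebraMap (↥K) K' t0)⁻¹ * A ^ s with hddef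
      have hd0 : d ≠ 0 := mul_ne_zero (inv_ne_zero ht00) (pow_ne_zero s hA0)
      have hβd : β d = d := by
        rw [hddef, map_mul, map_inv₀, hβt0, map_pow, hβA]
      have hαd : α d = (α (algebraMap (↥K) K' t0))⁻¹ * A ^ s := by
        rw [hddef, map_mul, map_inv₀, map_pow, hαA]
      have hdαd : d * α d = A⁻¹ := by
        rw [hαd, hddef]
        have h8 : ((algebraMap (↥K) K' t0)⁻¹ * A ^ s) * ((α (algebraMap (↥K) K' t0))⁻¹ * A ^ s)
            = ((algebraMap (↥K) K' t0) * α (algebraMap (↥K) K' t0))⁻¹ * A ^ (s + s) := by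
          rw [mul_inv, pow_add]
          ring
        rw [h8, ← hAn, hs]
        have h7 : A ^ (2 * s + 1) = A ^ (s + s) * A := by rw [two_mul, pow_succ]
        rw [h7, mul_inv]
        have hAs : A ^ (s + s) ≠ 0 := pow_ne_zero _ hA0
        field_simp
      set v : K'ˣ := u * Units.mk0 d hd0 with hvdef
      have hvval : (v : K') = U * d := rfl
      have hβvval : β (v : K') = β U * d := by rw [hvval, map_mul, hβd]
      have hαv1 : (v : K') * α (v : K') = 1 := by
        rw [hvval, map_mul]
        calc U * d * (α U * α d) = (U * α U) * (d * α d) := by ring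
          _ = A * A⁻¹ := by rw [← hAdef, hdαd]
          _ = 1 := mul_inv_cancel₀ hA0
      have hvmem : v ∈ K1' := by
        rw [hK1']
        apply (algebraMap (↥k') K').injective
        rw [T2, map_one]
        exact hαv1
      have hβv1 : β (v : K') * α (β (v : K')) = 1 := by
        rw [hαβfun, ← map_mul, hαv1, map_one]
      have hβvmem : β' • v ∈ K1' := by
        rw [hK1']
        apply (algebraMap (↥k') K').injective
        rw [T2, map_one]
        exact hβv1
      set V : ↥K1' := ⟨v, hvmem⟩ with hVdef
      set BV : ↥K1' := ⟨β' • v, hβvmem⟩ with hBVdef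
      have hxVB : x = BV * V⁻¹ := by
        apply Subtype.ext
        apply Units.ext
        show ((x : K'ˣ) : K') = ((β' • v * v⁻¹ : K'ˣ) : K')
        rw [huv, Units.val_mul, Units.val_inv_eq_inv_val,
          show ((β' • v : K'ˣ) : K') = β U * d from hβvval, hvval]
        field_simp
      have hVBV : ω' BV = ω' V := hinv V BV rfl
      rw [hxVB, map_mul, map_inv, hVBV, mul_inv_cancel]
    -- lift along the norm map
    have hsurj : Function.Surjective Nmap.rangeRestrict := Nmap.rangeRestrict_surjective
    set finv := Function.surjInv hsurj with hfinv
    have hrinv : Function.RightInverse finv Nmap.rangeRestrict :=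
      Function.rightInverse_surjInv hsurj
    have hkerle : Nmap.rangeRestrict.ker ≤ ω'.ker := by
      intro a ha
      have h1 : Nmap a = 1 := by
        have h2 := congrArg (fun z : Nmap.range => (z : ↥K1)) (MonoidHom.mem_ker.mp ha)
        exact h2
      exact MonoidHom.mem_ker.mpr (hker a h1)
    set φ : Nmap.range →* ℂˣ := Nmap.rangeRestrict.liftOfRightInverse finv hrinv ⟨ω', hkerle⟩
      with hφdef
    have hφ : ∀ x : ↥K1', φ (Nmap.rangeRestrict x) = ω' x := fun x =>
      Nmap.rangeRestrict.liftOfRightInverse_comp_apply finv hrinv _ x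
    obtain ⟨ω, hω⟩ := charExtend Nmap.range φ
    refine ⟨ω, fun x z hz => ?_⟩
    have hzeq : z = Nmap x := by
      apply Subtype.ext
      apply Units.ext
      exact hz
    rw [hzeq]
    exact ((hω (Nmap.rangeRestrict x)).trans (hφ x)).symm
  · -- easy direction
    rintro ⟨ω, hω⟩ x y hxy
    set t := Algebra.norm (↥K) ((x : K'ˣ) : K') with ht
    have htne : t ≠ 0 := Algebra.norm_ne_zero_iff.mpr (Units.ne_zero _)
    have hmem : Units.mk0 t htne ∈ K1 := by
      rw [hK1]
      show Algebra.norm k t = 1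
      rw [ht, Algebra.norm_norm, ← Algebra.norm_norm (R := k) (S := ↥k') (a := ((x : K'ˣ) : K')),
        (hK1' _).mp x.2, map_one]
    have h1 : ω' x = ω ⟨Units.mk0 t htne, hmem⟩ := hω x ⟨Units.mk0 t htne, hmem⟩ rfl
    have h2 : ω' y = ω ⟨Units.mk0 t htne, hmem⟩ := by
      apply hω y ⟨Units.mk0 t htne, hmem⟩
      show t = Algebra.norm (↥K) ((y : K'ˣ) : K')
      rw [hxy, show β ((x : K'ˣ) : K') = β' ((x : K'ˣ) : K') from rfl, norm_aut]
    rw [h1, h2]
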